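/- Let (w_j, a_j, b_j, c_j, φ_j) be a finite family of real numbers with w_j > 0, 0 ≤ φ_j < 2π, a_j, b_j, c_j ≥ 0, a_j² + b_j² + c_j² = 1 for all j, and Σ_j w_j = 6, Σ_j w_j a_j² = Σ_j w_j c_j². Then Σ_j w_j · η(a_j, b_j, c_j, φ_j) ≤ 60 + (15/2)·sqrt 22, where η(a,b,c,φ) := 15a² + 10b² + 5c² + sqrt(8b²|3a + 2c·e^{iφ}|² + (9a² + 2b² - c²)²). Equality holds if and only if (a_j, b_j, c_j, φ_j) = (3√2/8, √7/4, 3√2/8, 0) for all j. -/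
import Mathlib


/-- `η(a,b,c,φ) = 15a²+10b²+5c² + sqrt(8b²|3a+2c e^{iφ}|² + (9a²+2b²-c²)²)`. -/
noncomputable def η (a b c φ : ℝ) : ℝ :=
  15*a^2 + 10*b^2 + 5*c^2 +
    Real.sqrt (8*b^2*((3*a + 2*c*Real.cos φ)^2 + (2*c*Real.sin φ)^2)
      + (9*a^2 + 2*b^2 - c^2)^2)

set_option maxHeartbeats 800000 in
lemma key (a b c φ : ℝ) (ha : 0 ≤ a) (hb : 0 ≤ b) (hc : 0 ≤ c)
    (hn : a^2 + b^2 + c^2 = 1) :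
    η a b c φ ≤ (10 + 5/4*Real.sqrt 22) + (5 + 8/11*Real.sqrt 22)*(a^2 - c^2) ∧
    (η a b c φ = (10 + 5/4*Real.sqrt 22) + (5 + 8/11*Real.sqrt 22)*(a^2 - c^2) ↔
      a = 3*Real.sqrt 2/8 ∧ b = Real.sqrt 7/4 ∧ c = 3*Real.sqrt 2/8 ∧ Real.cos φ = 1) := by
  have hS2 : Real.sqrt 22^2 = 22 := Real.sq_sqrt (by norm_num)
  have hS0 : 0 < Real.sqrt 22 := Real.sqrt_pos.mpr (by norm_num)
  set S := Real.sqrt 22 with hSdef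
  set X := 8*b^2*((3*a + 2*c*Real.cos φ)^2 + (2*c*Real.sin φ)^2)
      + (9*a^2 + 2*b^2 - c^2)^2 with hXdef
  have hX0 : 0 ≤ X := by positivity
  have hb2 : b^2 = 1 - a^2 - c^2 := by linarith
  have hcs := Real.sin_sq_add_cos_sq φ
  have hXeq : X = 8*(1-a^2-c^2)*(9*a^2+4*c^2+12*a*c*Real.cos φ) + (2+7*a^2-3*c^2)^2 := by
    rw [hXdef, hb2]; linear_combination (32*(1-a^2-c^2)*c^2) * hcs
  set R := S/44 * (55 + 32*(a^2 - c^2)) with hRdef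
  have hc1 : c^2 ≤ 1 := by nlinarith [sq_nonneg a, sq_nonneg b]
  have hR0 : 0 < R := by
    apply mul_pos (by positivity)
    nlinarith [sq_nonneg a]
  have hR2 : R^2 = (55 + 32*(a^2 - c^2))^2 / 88 := by
    rw [hRdef]; linear_combination ((55 + 32*(a^2-c^2))^2/1936) * hS2
  have hcp1 : Real.cos φ ≤ 1 := Real.cos_le_one φ
  have hB0 : 0 ≤ 1 - a^2 - c^2 := by rw [← hb2]; positivity
  have hac0 : 0 ≤ a*c := mul_nonneg ha hc
  have hfac : 0 < 7700 - 1521*(a-c)^2 := by nlinarith [hac0, hB0]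
  have hid : 3*(704*(a*c)-198+215*(a-c)^2)^2
      + 3*((a-c)^2*(7700-1521*(a-c)^2))
      + 371712*((1-a^2-c^2)*(a*c)*(1-Real.cos φ))
      = 44*((55+32*(a^2-c^2))^2
        - 88*(8*(1-a^2-c^2)*(9*a^2+4*c^2+12*a*c*Real.cos φ) + (2+7*a^2-3*c^2)^2)) := by
    ring
  have hpos1 : 0 ≤ 3*(704*(a*c)-198+215*(a-c)^2)^2 := by positivity
  have hpos2 : 0 ≤ 3*((a-c)^2*(7700-1521*(a-c)^2)) := by positivity
  have hpos3 : 0 ≤ 371712*((1-a^2-c^2)*(a*c)*(1-Real.cos φ)) := by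
    apply mul_nonneg (by norm_num)
    exact mul_nonneg (mul_nonneg hB0 hac0) (by linarith)
  have hXR2 : X ≤ R^2 := by
    rw [hXeq, hR2]; linarith only [hid, hpos1, hpos2, hpos3]
  have hsqrt : Real.sqrt X ≤ R := by
    calc Real.sqrt X ≤ Real.sqrt (R^2) := Real.sqrt_le_sqrt hXR2
    _ = R := Real.sqrt_sq hR0.le
  have hQR : 15*a^2 + 10*b^2 + 5*c^2 + R
      = (10 + 5/4*S) + (5 + 8/11*S)*(a^2 - c^2) := by
    rw [hRdef]; linear_combination 10 * hn
  have hη : η a b c φ = 15*a^2 + 10*b^2 + 5*c^2 + Real.sqrt X := rfl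
  refine ⟨by rw [hη]; linarith, ?_, ?_⟩
  · intro heq
    have hsR : Real.sqrt X = R := by rw [hη] at heq; linarith
    have hXR : X = R^2 := by rw [← hsR]; exact (Real.sq_sqrt hX0).symm
    have hz : 3*(704*(a*c)-198+215*(a-c)^2)^2
        + 3*((a-c)^2*(7700-1521*(a-c)^2))
        + 371712*((1-a^2-c^2)*(a*c)*(1-Real.cos φ)) = 0 := by
      rw [hid]
      rw [hXeq, hR2] at hXR
      linear_combination (-3872)*hXR
    have hz2 : (a-c)^2*(7700-1521*(a-c)^2) = 0 := by
      linarith only [hz, hpos1, hpos2, hpos3]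
    have hxac : a = c := by
      have hx : (a-c)^2 = 0 := by
        rcases mul_eq_zero.mp hz2 with h | h
        · exact h
        · linarith only [h, hfac]
      have := pow_eq_zero_iff (two_ne_zero) |>.mp hx
      linarith only [this]
    have hz1 : (704*(a*c)-198+215*(a-c)^2)^2 = 0 := by
      linarith only [hz, hpos2, hpos3, sq_nonneg (704*(a*c)-198+215*(a-c)^2)]
    have hz1' : 704*(a*c)-198+215*(a-c)^2 = 0 :=
      pow_eq_zero_iff (two_ne_zero) |>.mp hz1
    have ha2 : a^2 = 9/32 := by
      linear_combination (1/704)*hz1' + (a - 215/704*(a-c))*hxac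
    have hc2 : c^2 = 9/32 := by rw [← hxac]; exact ha2
    have hb2' : b^2 = 7/16 := by rw [hb2, ha2, hc2]; norm_num
    have h2 : Real.sqrt 2^2 = 2 := Real.sq_sqrt (by norm_num)
    have h7 : Real.sqrt 7^2 = 7 := Real.sq_sqrt (by norm_num)
    have haval : a = 3*Real.sqrt 2/8 := by
      have hx : a^2 = (3*Real.sqrt 2/8)^2 := by rw [ha2]; linear_combination (-9/64)*h2
      calc a = Real.sqrt (a^2) := (Real.sqrt_sq ha).symm
      _ = Real.sqrt ((3*Real.sqrt 2/8)^2) := by rw [hx]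
      _ = 3*Real.sqrt 2/8 := Real.sqrt_sq (by positivity)
    have hbval : b = Real.sqrt 7/4 := by
      have hx : b^2 = (Real.sqrt 7/4)^2 := by rw [hb2']; linear_combination (-1/16)*h7
      calc b = Real.sqrt (b^2) := (Real.sqrt_sq hb).symm
      _ = Real.sqrt ((Real.sqrt 7/4)^2) := by rw [hx]
      _ = Real.sqrt 7/4 := Real.sqrt_sq (by positivity)
    have hcval : c = 3*Real.sqrt 2/8 := by rw [← hxac]; exact haval
    have hac2 : a*c = 9/32 := by rw [← hxac]; linear_combination ha2
    have hz3 : (1-a^2-c^2)*(a*c)*(1-Real.cos φ) = 0 := by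
      linarith only [hz, hpos1, hpos2, hpos3]
    have h63 : (1-a^2-c^2)*(a*c) = 63/512 := by rw [ha2, hc2, hac2]; norm_num
    have hz3' : (63:ℝ)/512 * (1 - Real.cos φ) = 0 := by rw [← h63]; exact hz3
    have : Real.cos φ = 1 := by linarith only [hz3']
    exact ⟨haval, hbval, hcval, this⟩
  · rintro ⟨ha', hb', hc', hcp⟩
    have h2 : Real.sqrt 2^2 = 2 := Real.sq_sqrt (by norm_num)
    have h7 : Real.sqrt 7^2 = 7 := Real.sq_sqrt (by norm_num)
    have ha2 : a^2 = 9/32 := by rw [ha']; linear_combination (9/64)*h2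
    have hb2' : b^2 = 7/16 := by rw [hb']; linear_combination (1/16)*h7
    have hca : c = a := by rw [ha', hc']
    have hsp : Real.sin φ = 0 := by
      have h1 : Real.sin φ^2 = 0 := by rw [hcp] at hcs; linarith
      exact pow_eq_zero_iff (two_ne_zero) |>.mp h1
    have hXval : X = 275/8 := by
      rw [hXdef, hcp, hsp, hca]
      linear_combination (232*b^2 + 64*(a^2+9/32))*ha2 + (232*(9/32) + 4*(b^2+7/16))*hb2'
    have hRval : R = 5*S/4 := by rw [hRdef, hca]; ring
    have hsR : Real.sqrt X = R := by
      rw [hXval, hRval, show (275/8:ℝ) = (5*S/4)^2 by linear_combination (-25/16)*hS2]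
      exact Real.sqrt_sq (by positivity)
    rw [hη, hsR]
    linarith [hQR]

theorem stmt2 {ι : Type*} [Fintype ι] (w a b c φ : ι → ℝ)
    (hw : ∀ j, 0 < w j)
    (hφ0 : ∀ j, 0 ≤ φ j) (hφ2 : ∀ j, φ j < 2*Real.pi)
    (ha : ∀ j, 0 ≤ a j) (hb : ∀ j, 0 ≤ b j) (hc : ∀ j, 0 ≤ c j)
    (hnorm : ∀ j, (a j)^2 + (b j)^2 + (c j)^2 = 1)
    (hsum : ∑ j, w j = 6)
    (hac : ∑ j, w j * (a j)^2 = ∑ j, w j * (c j)^2) :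
    ∑ j, w j * η (a j) (b j) (c j) (φ j) ≤ 60 + (15/2)*Real.sqrt 22 ∧
    (∑ j, w j * η (a j) (b j) (c j) (φ j) = 60 + (15/2)*Real.sqrt 22 ↔
      ∀ j, a j = 3*Real.sqrt 2/8 ∧ b j = Real.sqrt 7/4 ∧
        c j = 3*Real.sqrt 2/8 ∧ φ j = 0) := by
  have hkey := fun j => key (a j) (b j) (c j) (φ j) (ha j) (hb j) (hc j) (hnorm j)
  set K : ℝ := 10 + 5/4*Real.sqrt 22 with hK
  set M : ℝ := 5 + 8/11*Real.sqrt 22 with hM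
  have htot : ∑ j, w j * (K + M*((a j)^2 - (c j)^2)) = 60 + (15/2)*Real.sqrt 22 := by
    have h1 : ∑ j, w j * (K + M*((a j)^2 - (c j)^2))
        = K * (∑ j, w j) + M * ((∑ j, w j * (a j)^2) - ∑ j, w j * (c j)^2) := by
      rw [Finset.mul_sum, mul_sub, Finset.mul_sum, Finset.mul_sum,
        ← Finset.sum_sub_distrib, ← Finset.sum_add_distrib]
      exact Finset.sum_congr rfl fun j _ => by ring
    rw [h1, hsum, hac, sub_self, mul_zero, add_zero, hK]
    ring
  have hle : ∀ j, w j * η (a j) (b j) (c j) (φ j) ≤ w j * (K + M*((a j)^2 - (c j)^2)) :=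
    fun j => mul_le_mul_of_nonneg_left (hkey j).1 (hw j).le
  have hmain : ∑ j, w j * η (a j) (b j) (c j) (φ j) ≤ 60 + (15/2)*Real.sqrt 22 := by
    rw [← htot]; exact Finset.sum_le_sum fun j _ => hle j
  refine ⟨hmain, ?_, ?_⟩
  · intro heq
    have hzero : ∑ j, (w j * (K + M*((a j)^2 - (c j)^2)) - w j * η (a j) (b j) (c j) (φ j)) = 0 := by
      rw [Finset.sum_sub_distrib, htot, heq, sub_self]
    have hterm := (Finset.sum_eq_zero_iff_of_nonneg
      (fun j _ => sub_nonneg.mpr (hle j))).mp hzero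
    intro j
    have hj := hterm j (Finset.mem_univ j)
    have hηj : η (a j) (b j) (c j) (φ j) = K + M*((a j)^2 - (c j)^2) := by
      have hwj := (hw j).ne'
      have : w j * (K + M*((a j)^2 - (c j)^2) - η (a j) (b j) (c j) (φ j)) = 0 := by
        linarith [hj]
      rcases mul_eq_zero.mp this with h | h
      · exact absurd h hwj
      · linarith
    obtain ⟨h1, h2, h3, h4⟩ := (hkey j).2.mp hηj
    refine ⟨h1, h2, h3, ?_⟩
    have hπ : 0 < Real.pi := Real.pi_pos
    exact (Real.cos_eq_one_iff_of_lt_of_lt (by linarith [hφ0 j]) (hφ2 j)).mp h4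
  · intro hall
    have hηj : ∀ j, w j * η (a j) (b j) (c j) (φ j) = w j * (K + M*((a j)^2 - (c j)^2)) := by
      intro j
      obtain ⟨h1, h2, h3, h4⟩ := hall j
      have hcos : Real.cos (φ j) = 1 := by rw [h4]; exact Real.cos_zero
      rw [(hkey j).2.mpr ⟨h1, h2, h3, hcos⟩]
    rw [← htot]
    exact Finset.sum_congr rfl fun j _ => hηj j
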